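/- arXiv:1810.11640 — 4 statements merged into one kernel-verified Lean document; each statement's English description precedes it below -/
import Mathlib

section
/- Let C ⊆ ℝⁿ be a nonempty closed convex set, θ ≥ 0, x ∈ C, and y ∈ ℝⁿ. For any x̃ ∈ C, ỹ ∈ ℝⁿ, and any w ∈ P_C(y, x, θ), we have ‖w − P_C(ỹ)‖ ≤ ‖y − ỹ‖ + √(2θ)·‖y − x‖, where P_C(ỹ) denotes the exact projection of ỹ onto C. -/
open RealInnerProductSpace

/-- The feasible inexact projection set `P_C(y, x, θ)`. -/
def inexProj {n : ℕ} (C : Set (EuclideanSpace ℝ (Fin n))) (y x : EuclideanSpace ℝ (Fin n))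
    (θ : ℝ) : Set (EuclideanSpace ℝ (Fin n)) :=
  {w ∈ C | ∀ z ∈ C, ⟪y - w, z - w⟫ ≤ θ * ‖y - x‖ ^ 2}

/-- Stability of feasible inexact projections relative to the exact projection. -/
theorem inexProj_dist_exactProj {n : ℕ} (C : Set (EuclideanSpace ℝ (Fin n)))
    (hCne : C.Nonempty) (hCc : IsClosed C) (hCcv : Convex ℝ C)
    (θ : ℝ) (hθ : 0 ≤ θ) (x : EuclideanSpace ℝ (Fin n)) (hx : x ∈ C)
    (y ytil : EuclideanSpace ℝ (Fin n)) (xtil : EuclideanSpace ℝ (Fin n)) (hxtil : xtil ∈ C)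
    (w : EuclideanSpace ℝ (Fin n)) (hw : w ∈ inexProj C y x θ)
    (wtil : EuclideanSpace ℝ (Fin n)) (hwtilC : wtil ∈ C)
    (hwtil : ∀ z ∈ C, ⟪ytil - wtil, z - wtil⟫ ≤ 0) :
    ‖w - wtil‖ ≤ ‖y - ytil‖ + Real.sqrt (2 * θ) * ‖y - x‖ := by
  have h1 := hw.2 wtil hwtilC
  have h2 := hwtil w hw.1
  have hid : ⟪y - w, wtil - w⟫ + ⟪ytil - wtil, w - wtil⟫
      = ⟪y - ytil, wtil - w⟫ + ⟪wtil - w, wtil - w⟫ := by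
    simp only [inner_sub_left, inner_sub_right]; ring
  have hns : ⟪wtil - w, wtil - w⟫ = ‖w - wtil‖ ^ 2 := by
    rw [real_inner_self_eq_norm_sq, norm_sub_rev]
  have hcs : -(‖y - ytil‖ * ‖wtil - w‖) ≤ ⟪y - ytil, wtil - w⟫ := by
    have := abs_real_inner_le_norm (y - ytil) (wtil - w)
    have h := neg_le_of_abs_le this
    linarith
  have hnrev : ‖wtil - w‖ = ‖w - wtil‖ := norm_sub_rev _ _
  have key : ‖w - wtil‖ ^ 2 ≤ ‖y - ytil‖ * ‖w - wtil‖ + θ * ‖y - x‖ ^ 2 := by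
    rw [hnrev] at hcs
    linarith [h1, h2, hid, hns, hcs]
  set a := ‖w - wtil‖ with ha
  set b := ‖y - ytil‖ with hb
  set c := Real.sqrt (2 * θ) * ‖y - x‖ with hc
  have ha0 : 0 ≤ a := norm_nonneg _
  have hb0 : 0 ≤ b := norm_nonneg _
  have hc0 : 0 ≤ c := mul_nonneg (Real.sqrt_nonneg _) (norm_nonneg _)
  have hc2 : c ^ 2 = 2 * θ * ‖y - x‖ ^ 2 := by
    rw [hc, mul_pow, Real.sq_sqrt (by linarith : (0:ℝ) ≤ 2 * θ)]
  have key2 : a ^ 2 ≤ a * b + c ^ 2 / 2 := by rw [hc2]; nlinarith [key]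
  rcases le_or_gt a c with h | h
  · linarith
  · nlinarith [key2]
end

section
/- Let C ⊆ ℝⁿ be a nonempty closed convex set, x ∈ C, y, ỹ ∈ ℝⁿ, and θ, θ̃ ≥ 0. If w ∈ P_C(y, x, θ) and w̃ = P_C(ỹ) is the exact projection of ỹ onto C, then ‖w − w̃‖² ≤ ‖y − ỹ‖² + 2θ‖y − x‖². -/
open RealInnerProductSpace

/-- Squared-norm stability estimate for feasible inexact projections. -/
theorem inexProj_sq_dist_exactProj {n : ℕ} (C : Set (EuclideanSpace ℝ (Fin n)))
    (hCne : C.Nonempty) (hCc : IsClosed C) (hCcv : Convex ℝ C)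
    (x : EuclideanSpace ℝ (Fin n)) (hx : x ∈ C)
    (y ytil : EuclideanSpace ℝ (Fin n)) (θ : ℝ) (hθ : 0 ≤ θ)
    (w : EuclideanSpace ℝ (Fin n)) (hw : w ∈ inexProj C y x θ)
    (wtil : EuclideanSpace ℝ (Fin n)) (hwtilC : wtil ∈ C)
    (hwtil : ∀ z ∈ C, ⟪ytil - wtil, z - wtil⟫ ≤ 0) :
    ‖w - wtil‖ ^ 2 ≤ ‖y - ytil‖ ^ 2 + 2 * θ * ‖y - x‖ ^ 2 := by
  obtain ⟨hwC, hwp⟩ := hw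
  have h1 : ⟪y - w, wtil - w⟫ ≤ θ * ‖y - x‖ ^ 2 := hwp wtil hwtilC
  have h2 : ⟪ytil - wtil, w - wtil⟫ ≤ 0 := hwtil w hwC
  have h3 : ⟪y - ytil, w - wtil⟫ ≤ ‖y - ytil‖ * ‖w - wtil‖ := real_inner_le_norm _ _
  have hdec : (‖w - wtil‖ : ℝ) ^ 2 =
      ⟪y - w, wtil - w⟫ + ⟪y - ytil, w - wtil⟫ + ⟪ytil - wtil, w - wtil⟫ := by
    rw [← real_inner_self_eq_norm_sq]
    simp only [inner_sub_left, inner_sub_right]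
    ring
  nlinarith [sq_nonneg (‖y - ytil‖ - ‖w - wtil‖)]
end

section
/- Let Ω ⊆ ℝⁿ be open, C ⊆ Ω a nonempty closed convex set, f : Ω → ℝⁿ continuously differentiable, x̄ ∈ C with f(x̄) = 0 and f'(x̄) invertible. Suppose there are constants Γ > 0, L > 0, 0 < μ ≤ 1, and δ̂ > 0 with B_δ̂(x̄) ⊆ Ω such that for all x ∈ B_δ̂(x̄): (i) ‖f(x)‖ ≤ Γ‖x − x̄‖; (ii) f'(x) is invertible with ‖f'(x)⁻¹‖ ≤ ‖f'(x̄)⁻¹‖/(1 − L‖f'(x̄)⁻¹‖‖x − x̄‖^μ); (iii) ‖f(x̄) − f(x) − f'(x)(x̄ − x)‖ ≤ (μL/(1+μ))‖x − x̄‖^{1+μ}. Let 0 ≤ θ₀ and 0 ≤ η₀, let x₀ ∈ C ∩ B_δ̂(x̄), let y₀ ∈ ℝⁿ satisfy ‖f(x₀) + f'(x₀)(y₀ − x₀)‖ ≤ η₀‖f(x₀)‖, and let x₁ ∈ P_C(y₀, x₀, θ₀). Then ‖x₁ − x̄‖ ≤ [ (‖f'(x̄)⁻¹‖(η₀Γ(1+μ)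 + μL‖x₀ − x̄‖^μ)) / ((1+μ)(1 − L‖f'(x̄)⁻¹‖‖x₀ − x̄‖^μ)) · (1 + √(2θ₀)) + √(2θ₀) ] · ‖x₀ − x̄‖. -/
open Metric RealInnerProductSpace

private lemma aux_alg (nA d Γ L μ η₀ rμ r : ℝ) (hd : d ≠ 0) (hμ : (1:ℝ) + μ ≠ 0) :
    nA / d * (η₀ * (Γ * r) + μ * L / (1 + μ) * (rμ * r))
      = nA * (η₀ * Γ * (1 + μ) + μ * L * rμ) / ((1 + μ) * d) * r := by
  field_simp

/-- Single-step error estimate for the inexact Newton method with feasible inexact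
projections for smooth equations. -/
theorem inexact_newton_inexP_step {n : ℕ}
    (Ω : Set (EuclideanSpace ℝ (Fin n))) (hΩ : IsOpen Ω)
    (C : Set (EuclideanSpace ℝ (Fin n))) (hCsub : C ⊆ Ω)
    (hCne : C.Nonempty) (hCc : IsClosed C) (hCcv : Convex ℝ C)
    (f : EuclideanSpace ℝ (Fin n) → EuclideanSpace ℝ (Fin n))
    (f' : EuclideanSpace ℝ (Fin n) → EuclideanSpace ℝ (Fin n) →L[ℝ] EuclideanSpace ℝ (Fin n))
    (hf : ∀ x ∈ Ω, HasFDerivAt f (f' x) x)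
    (xbar : EuclideanSpace ℝ (Fin n)) (hxbarC : xbar ∈ C) (hfxbar : f xbar = 0)
    (A' : EuclideanSpace ℝ (Fin n) →L[ℝ] EuclideanSpace ℝ (Fin n))
    (hA'l : A'.comp (f' xbar) = ContinuousLinearMap.id ℝ _)
    (hA'r : (f' xbar).comp A' = ContinuousLinearMap.id ℝ _)
    (Γ L μ δhat : ℝ) (hΓ : 0 < Γ) (hL : 0 < L) (hμ0 : 0 < μ) (hμ1 : μ ≤ 1)
    (hδhat : 0 < δhat) (hδΩ : ball xbar δhat ⊆ Ω)
    (hgrow : ∀ x ∈ ball xbar δhat, ‖f x‖ ≤ Γ * ‖x - xbar‖)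
    (hinv : ∀ x ∈ ball xbar δhat,
      ∃ B : EuclideanSpace ℝ (Fin n) →L[ℝ] EuclideanSpace ℝ (Fin n),
        B.comp (f' x) = ContinuousLinearMap.id ℝ _ ∧
        (f' x).comp B = ContinuousLinearMap.id ℝ _ ∧
        ‖B‖ ≤ ‖A'‖ / (1 - L * ‖A'‖ * ‖x - xbar‖ ^ μ))
    (htaylor : ∀ x ∈ ball xbar δhat,
      ‖f xbar - f x - f' x (xbar - x)‖ ≤ μ * L / (1 + μ) * ‖x - xbar‖ ^ (1 + μ))
    (θ₀ η₀ : ℝ) (hθ₀ : 0 ≤ θ₀) (hη₀ : 0 ≤ η₀)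
    (x₀ : EuclideanSpace ℝ (Fin n)) (hx₀C : x₀ ∈ C) (hx₀B : x₀ ∈ ball xbar δhat)
    (hdenom : L * ‖A'‖ * ‖x₀ - xbar‖ ^ μ < 1)
    (y₀ : EuclideanSpace ℝ (Fin n))
    (hy₀ : ‖f x₀ + f' x₀ (y₀ - x₀)‖ ≤ η₀ * ‖f x₀‖)
    (x₁ : EuclideanSpace ℝ (Fin n)) (hx₁ : x₁ ∈ inexProj C y₀ x₀ θ₀) :
    ‖x₁ - xbar‖ ≤
      (‖A'‖ * (η₀ * Γ * (1 + μ) + μ * L * ‖x₀ - xbar‖ ^ μ) /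
          ((1 + μ) * (1 - L * ‖A'‖ * ‖x₀ - xbar‖ ^ μ)) * (1 + Real.sqrt (2 * θ₀))
        + Real.sqrt (2 * θ₀)) * ‖x₀ - xbar‖ := by

  obtain ⟨hx₁C, hx₁P⟩ := hx₁
  obtain ⟨B, hBl, hBr, hBn⟩ := hinv x₀ hx₀B
  have hμ1' : (0:ℝ) < 1 + μ := by linarith
  have hr0 : (0:ℝ) ≤ ‖x₀ - xbar‖ := norm_nonneg _
  have hrμ0 : (0:ℝ) ≤ ‖x₀ - xbar‖ ^ μ := Real.rpow_nonneg hr0 _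
  have hd : (0:ℝ) < 1 - L * ‖A'‖ * ‖x₀ - xbar‖ ^ μ := by linarith
  set r := ‖x₀ - xbar‖ with hrdef
  set a := ‖x₁ - xbar‖ with hadef
  set b := ‖y₀ - xbar‖ with hbdef
  set s := Real.sqrt (2 * θ₀) with hsdef
  set K := ‖A'‖ * (η₀ * Γ * (1 + μ) + μ * L * r ^ μ) / ((1 + μ) * (1 - L * ‖A'‖ * r ^ μ))
    with hKdef
  have hid : B ((f' x₀) (y₀ - xbar)) = y₀ - xbar := by
    have := congrArg (fun T => T (y₀ - xbar)) hBl
    simpa using this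
  have key : (f' x₀) (y₀ - xbar)
      = (f x₀ + (f' x₀) (y₀ - x₀)) + (f xbar - f x₀ - (f' x₀) (xbar - x₀)) := by
    have h1 : y₀ - xbar = (y₀ - x₀) - (xbar - x₀) := by abel
    rw [h1, map_sub, hfxbar]
    abel
  have hfb : ‖f x₀‖ ≤ Γ * r := hgrow x₀ hx₀B
  have htay := htaylor x₀ hx₀B
  have hbB : b ≤ ‖B‖ * (η₀ * (Γ * r) + μ * L / (1 + μ) * r ^ (1 + μ)) := by
    calc b = ‖B ((f' x₀) (y₀ - xbar))‖ := by rw [hid]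
    _ ≤ ‖B‖ * ‖(f' x₀) (y₀ - xbar)‖ := B.le_opNorm _
    _ ≤ ‖B‖ * (η₀ * (Γ * r) + μ * L / (1 + μ) * r ^ (1 + μ)) := by
        refine mul_le_mul_of_nonneg_left ?_ (norm_nonneg _)
        rw [key]
        refine (norm_add_le _ _).trans (add_le_add (hy₀.trans ?_) htay)
        exact mul_le_mul_of_nonneg_left hfb hη₀
  have hinner0 : (0:ℝ) ≤ η₀ * (Γ * r) + μ * L / (1 + μ) * r ^ (1 + μ) := by
    have : (0:ℝ) ≤ r ^ (1 + μ) := Real.rpow_nonneg hr0 _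
    positivity
  have hbb : b ≤ ‖A'‖ / (1 - L * ‖A'‖ * r ^ μ) *
      (η₀ * (Γ * r) + μ * L / (1 + μ) * r ^ (1 + μ)) :=
    hbB.trans (mul_le_mul_of_nonneg_right hBn hinner0)
  have hpow : r ^ (1 + μ) = r ^ μ * r := by
    rw [Real.rpow_add' hr0 (by linarith), Real.rpow_one]
    ring
  have hbK : b ≤ K * r := by
    refine hbb.trans (le_of_eq ?_)
    rw [hpow, hKdef]
    exact aux_alg _ _ _ _ _ _ _ _ hd.ne' (by linarith)
  have hK0 : 0 ≤ K := by
    have hdd : (0:ℝ) < (1 + μ) * (1 - L * ‖A'‖ * r ^ μ) := mul_pos hμ1' hd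
    have hnum : (0:ℝ) ≤ ‖A'‖ * (η₀ * Γ * (1 + μ) + μ * L * r ^ μ) :=
      mul_nonneg (norm_nonneg _)
        (add_nonneg (by positivity) (mul_nonneg (mul_nonneg hμ0.le hL.le) hrμ0))
    exact div_nonneg hnum hdd.le
  have hproj := hx₁P xbar hxbarC
  have hexp : (⟪y₀ - x₁, xbar - x₁⟫ : ℝ) + ⟪y₀ - xbar, x₁ - xbar⟫ = a ^ 2 := by
    rw [hadef, ← real_inner_self_eq_norm_sq]
    simp only [inner_sub_left, inner_sub_right]
    ring
  have hcs : (⟪y₀ - xbar, x₁ - xbar⟫ : ℝ) ≤ b * a := real_inner_le_norm _ _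
  have hyx : ‖y₀ - x₀‖ ≤ b + r := by
    calc ‖y₀ - x₀‖ = ‖(y₀ - xbar) - (x₀ - xbar)‖ := by congr 1; abel
    _ ≤ b + r := norm_sub_le _ _
  have hsq : a ^ 2 ≤ b * a + θ₀ * (b + r) ^ 2 := by
    have h1 : θ₀ * ‖y₀ - x₀‖ ^ 2 ≤ θ₀ * (b + r) ^ 2 :=
      mul_le_mul_of_nonneg_left (pow_le_pow_left₀ (norm_nonneg _) hyx 2) hθ₀
    linarith [hproj, hcs, hexp, h1]
  have hs0 : 0 ≤ s := Real.sqrt_nonneg _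
  have hs2 : s ^ 2 = 2 * θ₀ := Real.sq_sqrt (by linarith)
  have ha0 : 0 ≤ a := norm_nonneg _
  have hb0 : 0 ≤ b := norm_nonneg _
  have hsq' : a ^ 2 ≤ b * a + s ^ 2 * (b + r) ^ 2 := by
    have hθs : θ₀ * (b + r) ^ 2 ≤ s ^ 2 * (b + r) ^ 2 :=
      mul_le_mul_of_nonneg_right (by linarith) (sq_nonneg _)
    linarith
  have hx0 : (0:ℝ) ≤ s * (b + r) := mul_nonneg hs0 (add_nonneg hb0 hr0)
  have step1 : a ≤ b + s * (b + r) := by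
    by_cases hab : a ≤ b
    · linarith
    · push_neg at hab
      by_contra hcon
      push_neg at hcon
      have ha' : 0 < a := lt_of_le_of_lt hb0 hab
      have h1 : s * (b + r) < a - b := by linarith
      have h2 : s * (b + r) * (s * (b + r)) ≤ a * (s * (b + r)) :=
        mul_le_mul_of_nonneg_right (by linarith) hx0
      have h3 : a * (s * (b + r)) < a * (a - b) := by
        exact mul_lt_mul_of_pos_left h1 ha'
      linarith
  have step2 : (1 + s) * b ≤ (1 + s) * (K * r) :=
    mul_le_mul_of_nonneg_left hbK (by positivity)
  have hsr : 0 ≤ s * r := mul_nonneg hs0 hr0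
  linarith [step1, step2]
end

section
/- Let C ⊆ ℝⁿ be a nonempty closed convex set, x̄ ∈ C, x₀ ∈ C, y₀ ∈ ℝⁿ, θ₀ ≥ 0, and x₁ ∈ P_C(y₀, x₀, θ₀). Then ‖x₁ − x̄‖ ≤ (1 + √(2θ₀))‖y₀ − x̄‖ + √(2θ₀)‖x₀ − x̄‖. -/
open RealInnerProductSpace

/-- Bound on the distance of a feasible inexact projection to a point of `C`. -/
theorem inexProj_dist_to_point {n : ℕ} (C : Set (EuclideanSpace ℝ (Fin n)))
    (hCne : C.Nonempty) (hCc : IsClosed C) (hCcv : Convex ℝ C)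
    (xbar : EuclideanSpace ℝ (Fin n)) (hxbar : xbar ∈ C)
    (x₀ : EuclideanSpace ℝ (Fin n)) (hx₀ : x₀ ∈ C)
    (y₀ : EuclideanSpace ℝ (Fin n)) (θ₀ : ℝ) (hθ₀ : 0 ≤ θ₀)
    (x₁ : EuclideanSpace ℝ (Fin n)) (hx₁ : x₁ ∈ inexProj C y₀ x₀ θ₀) :
    ‖x₁ - xbar‖ ≤ (1 + Real.sqrt (2 * θ₀)) * ‖y₀ - xbar‖
        + Real.sqrt (2 * θ₀) * ‖x₀ - xbar‖ := by
  obtain ⟨hx₁C, hproj⟩ := hx₁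
  have hkey := hproj xbar hxbar
  set a := ‖y₀ - xbar‖ with ha
  set b := ‖y₀ - x₀‖ with hb
  set s := Real.sqrt (2 * θ₀) with hs
  have hs0 : 0 ≤ s := Real.sqrt_nonneg _
  have hs2 : s ^ 2 = 2 * θ₀ := Real.sq_sqrt (by linarith)
  -- expand norms
  have hexp : ‖x₁ - xbar‖ ^ 2
      = ‖y₀ - xbar‖ ^ 2 - ‖y₀ - x₁‖ ^ 2 + 2 * ⟪y₀ - x₁, xbar - x₁⟫ := by
    have h1 : (x₁ - xbar : EuclideanSpace ℝ (Fin n)) = (y₀ - xbar) - (y₀ - x₁) := by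
      abel
    have h2 : (xbar - x₁ : EuclideanSpace ℝ (Fin n)) = (y₀ - x₁) - (y₀ - xbar) := by
      abel
    rw [h1, h2, @norm_sub_sq_real]
    simp only [inner_sub_left, inner_sub_right, real_inner_self_eq_norm_sq]
    have h3 : ‖y₀ - x₁‖ ^ 2 = ‖y₀‖ ^ 2 - 2 * ⟪x₁, y₀⟫ + ‖x₁‖ ^ 2 := by
      rw [@norm_sub_sq_real, real_inner_comm]
    have c1 := real_inner_comm xbar y₀
    have c2 := real_inner_comm xbar x₁
    have c3 := real_inner_comm x₁ y₀
    linarith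
  have hsq : ‖x₁ - xbar‖ ^ 2 ≤ (a + s * b) ^ 2 := by
    have hnn : (0:ℝ) ≤ ‖y₀ - x₁‖ ^ 2 := sq_nonneg _
    have hab : 0 ≤ a * (s * b) := by positivity
    nlinarith [hkey, hexp]
  have h1 : ‖x₁ - xbar‖ ≤ a + s * b := by
    have h := Real.sqrt_le_sqrt hsq
    rwa [Real.sqrt_sq (norm_nonneg _), Real.sqrt_sq (by positivity)] at h
  have htri : b ≤ a + ‖x₀ - xbar‖ := by
    have := norm_sub_le (y₀ - xbar) (x₀ - xbar)
    have he : (y₀ - xbar) - (x₀ - xbar) = (y₀ - x₀ : EuclideanSpace ℝ (Fin n)) := by abel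
    rw [he] at this
    exact this
  nlinarith [mul_le_mul_of_nonneg_left htri hs0]
end
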